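/- If {(c_r, φ_r)} is an (M+1)-copy CSS in ℂ^d, then for every pure state ψ ∈ ℂ^d, the reconstructed single-copy state σ = Σ_r d_M^+ c_r |⟨φ_r|ψ⟩|^{2M} |φ_r⟩⟨φ_r| satisfies ⟨ψ|σ|ψ⟩ = (M+1)/(M+d). -/

import Mathlib

open scoped BigOperators

/-- `M`-fold tensor power `|φ⟩^{⊗M}` of a vector `φ ∈ ℂ^d`, as a vector on the
computational product basis `Fin M → Fin d`. -/
noncomputable def vecPow {d : ℕ} (M : ℕ) (φ : Fin d → ℂ) : (Fin M → Fin d) → ℂ :=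
  fun f => ∏ i, φ (f i)

/-- Rank-one operator `|v⟩⟨v|`. -/
noncomputable def projOp {n : Type*} [Fintype n] (v : n → ℂ) : Matrix n n ℂ :=
  Matrix.of fun i j => v i * star (v j)

/-- The orthogonal projector `P_+^M` onto the symmetric subspace of `(ℂ^d)^{⊗M}`. -/
noncomputable def symProj (d M : ℕ) : Matrix (Fin M → Fin d) (Fin M → Fin d) ℂ :=
  Matrix.of fun f g =>
    (∑ σ : Equiv.Perm (Fin M), if f = g ∘ σ then (1 : ℂ) else 0) / (Nat.factorial M : ℂ)

/-- `d_M^+ = C(M+d-1, M)`, the dimension of the symmetric subspace. -/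
def dPlus (d M : ℕ) : ℕ := (M + d - 1).choose M

lemma sum_rot {i1 i2 i3 : Type*} [Fintype i1] [Fintype i2] [Fintype i3]
    (F : i1 -> i2 -> i3 -> Complex) :
    ∑ a, ∑ b, ∑ r, F a b r = ∑ r, ∑ a, ∑ b, F a b r :=
  calc ∑ a, ∑ b, ∑ r, F a b r
      = ∑ a, ∑ r, ∑ b, F a b r := Finset.sum_congr rfl fun a _ => Finset.sum_comm
    _ = ∑ r, ∑ a, ∑ b, F a b r := Finset.sum_comm

lemma sum_prod_pow {d n : ℕ} (h : Fin d → ℂ) :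
    ∑ f : Fin n → Fin d, ∏ i, h (f i) = (∑ j, h j) ^ n := by
  rw [← Fin.prod_const n (∑ j, h j), Finset.prod_univ_sum]
  simp [Fintype.piFinset_univ]

lemma star_vecPow {d n : ℕ} (w : Fin d → ℂ) (f : Fin n → Fin d) :
    star (vecPow n w f) = ∏ i, star (w (f i)) := by
  simp [vecPow, star_prod]

lemma sandwich_proj {d n : ℕ} (v w : Fin d → ℂ) :
    ∑ f : Fin n → Fin d, ∑ g : Fin n → Fin d,
      star (vecPow n w f) * projOp (vecPow n v) f g * vecPow n w g
    = (∑ j, star (w j) * v j) ^ n * (∑ j, star (v j) * w j) ^ n := by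
  have h1 : ∑ f : Fin n → Fin d, star (vecPow n w f) * vecPow n v f
      = (∑ j, star (w j) * v j) ^ n := by
    rw [← sum_prod_pow (fun j => star (w j) * v j)]
    exact Finset.sum_congr rfl fun f _ => by
      rw [star_vecPow, vecPow, ← Finset.prod_mul_distrib]
  have h2 : ∑ g : Fin n → Fin d, star (vecPow n v g) * vecPow n w g
      = (∑ j, star (v j) * w j) ^ n := by
    rw [← sum_prod_pow (fun j => star (v j) * w j)]
    exact Finset.sum_congr rfl fun g _ => by
      rw [star_vecPow, vecPow, ← Finset.prod_mul_distrib]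
  rw [← h1, ← h2, Finset.sum_mul_sum]
  exact Finset.sum_congr rfl fun f _ => Finset.sum_congr rfl fun g _ => by
    simp [projOp]; ring

lemma sandwich_symProj {d n : ℕ} (w : Fin d → ℂ) (hw : ∑ j, w j * star (w j) = 1) :
    ∑ f : Fin n → Fin d, ∑ g : Fin n → Fin d,
      star (vecPow n w f) * symProj d n f g * vecPow n w g = 1 := by
  have key : ∀ (σ : Equiv.Perm (Fin n)) (g : Fin n → Fin d),
      star (vecPow n w (g ∘ σ)) * vecPow n w g = ∏ i, (star (w (g i)) * w (g i)) := by
    intro σ g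
    rw [star_vecPow, vecPow]
    have : ∏ i, star (w ((g ∘ σ) i)) = ∏ i, star (w (g i)) :=
      Equiv.prod_comp σ (fun i => star (w (g i)))
    rw [this, ← Finset.prod_mul_distrib]
  calc ∑ f : Fin n → Fin d, ∑ g : Fin n → Fin d,
        star (vecPow n w f) * symProj d n f g * vecPow n w g
      = ∑ g : Fin n → Fin d, ∑ σ : Equiv.Perm (Fin n),
          (star (vecPow n w (g ∘ σ)) * vecPow n w g) / (Nat.factorial n : ℂ) := by
        rw [Finset.sum_comm]
        refine Finset.sum_congr rfl fun g _ => ?_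
        have h1 : ∀ f : Fin n → Fin d, star (vecPow n w f) * symProj d n f g * vecPow n w g
            = ∑ σ : Equiv.Perm (Fin n),
                if f = g ∘ σ then star (vecPow n w (g ∘ σ)) * vecPow n w g / (Nat.factorial n : ℂ)
                else 0 := by
          intro f
          simp only [symProj, Matrix.of_apply, div_eq_mul_inv, Finset.sum_mul, Finset.mul_sum]
          refine Finset.sum_congr rfl fun σ _ => ?_
          split_ifs with h
          · subst h; ring
          · simp
        rw [Finset.sum_congr rfl fun f _ => h1 f, Finset.sum_comm]
        refine Finset.sum_congr rfl fun σ _ => ?_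
        rw [Finset.sum_ite_eq' Finset.univ (g ∘ ⇑σ)]
        simp
    _ = ∑ g : Fin n → Fin d, ∑ σ : Equiv.Perm (Fin n),
          (∏ i, (star (w (g i)) * w (g i))) / (Nat.factorial n : ℂ) := by
        exact Finset.sum_congr rfl fun g _ => Finset.sum_congr rfl fun σ _ => by rw [key]
    _ = 1 := by
        simp only [Finset.sum_const, Finset.card_univ, Fintype.card_perm, nsmul_eq_mul,
          ← Finset.sum_div, ← Finset.mul_sum]
        rw [sum_prod_pow (fun j => star (w j) * w j)]
        have : (∑ j, star (w j) * w j) = 1 := by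
          rw [← hw]; exact Finset.sum_congr rfl fun j _ => mul_comm _ _
        rw [this, one_pow, Fintype.card_fin]
        have hne : ((Nat.factorial n : ℂ)) ≠ 0 := Nat.cast_ne_zero.mpr (Nat.factorial_ne_zero n)
        rw [mul_one_div]; exact div_self hne

/-- Universal fidelity of reconstruction from an `(M+1)`-copy CSS: for every
unit vector `ψ`, the reconstructed single-copy state
`σ = Σ_r d_M^+ c_r |⟨φ_r|ψ⟩|^{2M} |φ_r⟩⟨φ_r|` satisfies
`⟨ψ|σ|ψ⟩ = (M+1)/(M+d)`. -/
theorem css_universal_fidelity (d M R : ℕ)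
    (φ : Fin R → Fin d → ℂ) (c : Fin R → ℝ)
    (hunit : ∀ r, ∑ j, φ r j * star (φ r j) = 1)
    (hc : ∀ r, 0 ≤ c r)
    (hCSS : ∑ r, (c r : ℂ) • projOp (vecPow (M + 1) (φ r))
      = ((dPlus d (M + 1) : ℂ))⁻¹ • symProj d (M + 1))
    (ψ : Fin d → ℂ) (hψ : ∑ j, ψ j * star (ψ j) = 1) :
    ∑ a, ∑ b, star (ψ a) *
        (∑ r, (dPlus d M : ℂ) * (c r : ℂ) *
          ((∑ j, star (φ r j) * ψ j) * star (∑ j, star (φ r j) * ψ j)) ^ M *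
          (φ r a * star (φ r b))) * ψ b
      = ((M + 1 : ℕ) : ℂ) / ((M + d : ℕ) : ℂ) := by
  have hd : 0 < d := by
    rcases Nat.eq_zero_or_pos d with hd | hd
    · subst hd; simpa using hψ
    · exact hd
  set n := M + 1 with hn
  set β : Fin R → ℂ := fun r => ∑ j, star (φ r j) * ψ j with hβ
  set γ : Fin R → ℂ := fun r => ∑ j, star (ψ j) * φ r j with hγ
  have hstar : ∀ r, star (β r) = γ r := by
    intro r
    simp only [hβ, hγ, star_sum, star_mul', star_star]
    exact Finset.sum_congr rfl fun j _ => mul_comm _ _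
  -- key identity from hCSS
  have hsand := congrArg
    (fun A : Matrix (Fin n → Fin d) (Fin n → Fin d) ℂ =>
      ∑ f, ∑ g, star (vecPow n ψ f) * A f g * vecPow n ψ g) hCSS
  have hL : ∑ f, ∑ g, star (vecPow n ψ f) *
        ((∑ r, (c r : ℂ) • projOp (vecPow n (φ r))) f g) * vecPow n ψ g
      = ∑ r, (c r : ℂ) * (γ r ^ n * β r ^ n) := by
    have step : ∀ f g : Fin n → Fin d, star (vecPow n ψ f) *
          ((∑ r, (c r : ℂ) • projOp (vecPow n (φ r))) f g) * vecPow n ψ g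
        = ∑ r, (c r : ℂ) *
            (star (vecPow n ψ f) * projOp (vecPow n (φ r)) f g * vecPow n ψ g) := by
      intro f g
      simp only [Matrix.sum_apply, Matrix.smul_apply, smul_eq_mul, Finset.sum_mul,
        Finset.mul_sum]
      exact Finset.sum_congr rfl fun r _ => by ring
    calc ∑ f, ∑ g, star (vecPow n ψ f) *
            ((∑ r, (c r : ℂ) • projOp (vecPow n (φ r))) f g) * vecPow n ψ g
        = ∑ f : Fin n → Fin d, ∑ g : Fin n → Fin d, ∑ r, (c r : ℂ) *
            (star (vecPow n ψ f) * projOp (vecPow n (φ r)) f g * vecPow n ψ g) := by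
          exact Finset.sum_congr rfl fun f _ => Finset.sum_congr rfl fun g _ => step f g
      _ = ∑ r, ∑ f : Fin n → Fin d, ∑ g : Fin n → Fin d, (c r : ℂ) *
            (star (vecPow n ψ f) * projOp (vecPow n (φ r)) f g * vecPow n ψ g) := by
          exact sum_rot _
      _ = ∑ r, (c r : ℂ) * (γ r ^ n * β r ^ n) := by
          refine Finset.sum_congr rfl fun r _ => ?_
          simp only [← Finset.mul_sum]
          rw [sandwich_proj (φ r) ψ]
  have hR : ∑ f, ∑ g, star (vecPow n ψ f) *
        ((((dPlus d n : ℂ))⁻¹ • symProj d n) f g) * vecPow n ψ g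
      = ((dPlus d n : ℂ))⁻¹ := by
    have step : ∀ f g : Fin n → Fin d, star (vecPow n ψ f) *
          ((((dPlus d n : ℂ))⁻¹ • symProj d n) f g) * vecPow n ψ g
        = ((dPlus d n : ℂ))⁻¹ *
            (star (vecPow n ψ f) * symProj d n f g * vecPow n ψ g) := by
      intro f g; simp only [Matrix.smul_apply, smul_eq_mul]; ring
    calc ∑ f, ∑ g, star (vecPow n ψ f) *
            ((((dPlus d n : ℂ))⁻¹ • symProj d n) f g) * vecPow n ψ g
        = ((dPlus d n : ℂ))⁻¹ * ∑ f : Fin n → Fin d, ∑ g : Fin n → Fin d,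
            star (vecPow n ψ f) * symProj d n f g * vecPow n ψ g := by
          simp only [Finset.mul_sum]
          exact Finset.sum_congr rfl fun f _ => Finset.sum_congr rfl fun g _ => step f g
      _ = ((dPlus d n : ℂ))⁻¹ := by rw [sandwich_symProj ψ hψ, mul_one]
  have key : ∑ r, (c r : ℂ) * (γ r ^ n * β r ^ n) = ((dPlus d n : ℂ))⁻¹ := by
    rw [← hL, ← hR]; exact hsand
  -- transform the goal
  have hgoal : ∑ a, ∑ b, star (ψ a) *
        (∑ r, (dPlus d M : ℂ) * (c r : ℂ) * (β r * star (β r)) ^ M *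
          (φ r a * star (φ r b))) * ψ b
      = (dPlus d M : ℂ) * ∑ r, (c r : ℂ) * (γ r ^ n * β r ^ n) := by
    calc ∑ a, ∑ b, star (ψ a) *
          (∑ r, (dPlus d M : ℂ) * (c r : ℂ) * (β r * star (β r)) ^ M *
            (φ r a * star (φ r b))) * ψ b
        = ∑ a, ∑ b, ∑ r, (dPlus d M : ℂ) * (c r : ℂ) * (β r * star (β r)) ^ M *
            ((star (ψ a) * φ r a) * (star (φ r b) * ψ b)) := by
          refine Finset.sum_congr rfl fun a _ => Finset.sum_congr rfl fun b _ => ?_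
          simp only [Finset.sum_mul, Finset.mul_sum]
          exact Finset.sum_congr rfl fun r _ => by ring
      _ = ∑ r, ∑ a, ∑ b, (dPlus d M : ℂ) * (c r : ℂ) * (β r * star (β r)) ^ M *
            ((star (ψ a) * φ r a) * (star (φ r b) * ψ b)) := by
          exact sum_rot _
      _ = ∑ r, (dPlus d M : ℂ) * (c r : ℂ) * (β r * star (β r)) ^ M * (γ r * β r) := by
          refine Finset.sum_congr rfl fun r _ => ?_
          have hx : γ r * β r
              = ∑ a, ∑ b, (star (ψ a) * φ r a) * (star (φ r b) * ψ b) :=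
            Finset.sum_mul_sum _ _ _ _
          rw [hx, Finset.mul_sum]
          exact Finset.sum_congr rfl fun a _ => by rw [Finset.mul_sum]
      _ = (dPlus d M : ℂ) * ∑ r, (c r : ℂ) * (γ r ^ n * β r ^ n) := by
          rw [Finset.mul_sum]
          refine Finset.sum_congr rfl fun r _ => ?_
          rw [hstar r, hn]
          ring
  rw [hgoal, key]
  -- final arithmetic
  have hnat : (M + d) * dPlus d M = dPlus d n * (M + 1) := by
    have h1 : dPlus d n = (M + d).choose (M + 1) := by
      simp only [dPlus, hn]
      congr 1
      omega
    have h2 : M + d = Nat.succ (M + d - 1) := by omega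
    rw [h1, h2]
    simp only [dPlus]
    have h3 : M + 1 + d - 1 = M + d - 1 + 1 := by omega
    exact Nat.add_one_mul_choose_eq (M + d - 1) M
  have hdp : ((dPlus d n : ℂ)) ≠ 0 := by
    have : 0 < dPlus d n := by
      have h1 : dPlus d n = (M + d).choose (M + 1) := by
        simp only [dPlus, hn]; congr 1; omega
      rw [h1]
      exact Nat.choose_pos (by omega)
    exact_mod_cast this.ne'
  have hmd : (((M + d : ℕ) : ℂ)) ≠ 0 := by
    have : 0 < M + d := by omega
    exact_mod_cast this.ne'
  have hcast := congrArg (fun k : ℕ => (k : ℂ)) hnat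
  push_cast at hcast
  rw [eq_div_iff hmd, hn]
  push_cast
  rw [hn] at hdp hcast
  field_simp
  linear_combination hcast
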